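/- Let n be a nilpotent endomorphism of V of Jordan type (p,q) with p ≥ q ≥ 1, and let F₁ ⊆ V be a 1-dimensional subspace contained in ker(n). If F₁ ≠ span(e_{1,1}) (i.e., F₁ is spanned by a·e_{1,1} + e_{1,2} for some a ∈ K), then the induced endomorphism on V/F₁ is nilpotent of Jordan type (p, q−1) (or type (p) if q = 1). -/

import Mathlib

open Submodule

/-- kernel of `mapQ` as image of a comap. -/
lemma myKerMapQ {K V : Type*} [Field K] [AddCommGroup V] [Module K V]
    (p : Submodule K V) (f : V →ₗ[K] V) (h : p ≤ p.comap f) :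
    LinearMap.ker (p.mapQ p f h) = (p.comap f).map p.mkQ := by
  have e : p.mapQ p f h = p.liftQ (p.mkQ.comp f) (by simpa [LinearMap.ker_comp] using h) := rfl
  rw [e, Submodule.ker_liftQ, LinearMap.ker_comp, Submodule.ker_mkQ]

lemma myComapSpan {K V ι : Type*} [Field K] [AddCommGroup V] [Module K V] [Fintype ι]
    [DecidableEq ι]
    (b : Module.Basis ι K V) (σ : ι → Option ι)
    (hinj : ∀ i i' k, σ i = some k → σ i' = some k → i = i')
    (T : V →ₗ[K] V) (hT : ∀ i, T (b i) = (σ i).elim 0 b) (S : Set ι) :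
    Submodule.comap T (Submodule.span K (b '' S)) =
      Submodule.span K (b '' {i | ∀ k, σ i = some k → k ∈ S}) := by
  apply le_antisymm
  · intro x hx
    rw [Submodule.mem_comap] at hx
    rw [Module.Basis.mem_span_image] at hx ⊢
    intro i hi
    by_contra hiS
    simp only [Set.mem_setOf_eq, not_forall] at hiS
    obtain ⟨k, hk, hkS⟩ := hiS
    have hTx : T x = ∑ i', b.repr x i' • (σ i').elim 0 b := by
      conv_lhs => rw [← b.sum_repr x]
      rw [map_sum]
      refine Finset.sum_congr rfl fun i' _ => ?_
      rw [map_smul, hT]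
    have hrepr : b.repr (T x) k = b.repr x i := by
      rw [hTx, map_sum]
      rw [Finsupp.finset_sum_apply]
      rw [Finset.sum_eq_single i]
      · rw [map_smul, Finsupp.smul_apply, hk]
        simp [Module.Basis.repr_self]
      · intro i' _ hne
        rw [map_smul, Finsupp.smul_apply]
        cases hσ : σ i' with
        | none => simp [hσ]
        | some k' =>
          have : k' ≠ k := fun hkk => hne (hinj i' i k (hkk ▸ hσ) hk)
          simp [hσ, Module.Basis.repr_self, Finsupp.single_apply, this]
      · intro habs
        exact absurd (Finset.mem_univ i) habs
    have h0 : b.repr (T x) k = 0 := by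
      by_contra h0
      exact hkS (hx (Finsupp.mem_support_iff.2 h0))
    rw [hrepr] at h0
    exact (Finsupp.mem_support_iff.1 hi) h0
  · rw [Submodule.span_le]
    rintro _ ⟨i, hi, rfl⟩
    rw [SetLike.mem_coe, Submodule.mem_comap, hT]
    cases hσ : σ i with
    | none => simp
    | some k =>
      simp only [Option.elim]
      exact Submodule.subset_span ⟨k, hi k hσ, rfl⟩

lemma myFinrankSpan {K V ι : Type*} [Field K] [AddCommGroup V] [Module K V] [Fintype ι]
    (b : Module.Basis ι K V) (t : Finset ι) :
    Module.finrank K (Submodule.span K (b '' ↑t)) = t.card := by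
  have hli : LinearIndependent K (fun i : {x // x ∈ t} => b i) :=
    b.linearIndependent.comp _ Subtype.val_injective
  rw [Set.image_eq_range]
  exact (finrank_span_eq_card hli).trans (Fintype.card_coe t)

lemma myCardLt (p s : ℕ) : (Finset.univ.filter fun j : Fin p => j.1 < s).card = min s p := by
  rw [show (Finset.univ.filter fun j : Fin p => j.1 < s)
      = Finset.univ.filter ((· < s) ∘ ⇑Fin.valEmbedding) from rfl]
  rw [← Finset.card_map Fin.valEmbedding, ← Finset.filter_map, Fin.map_valEmbedding_univ,
    Finset.Iio_filter_lt, Nat.card_Iio]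
  omega

/-- the shift map on indices after `s` steps. -/
def sig (p q s : ℕ) : Fin p ⊕ Fin q → Option (Fin p ⊕ Fin q)
  | .inl j => if h : s ≤ j.1 then some (.inl ⟨j.1 - s, by omega⟩) else none
  | .inr j => if h : s ≤ j.1 then some (.inr ⟨j.1 - s, by omega⟩) else none

lemma sig_inj (p q s : ℕ) : ∀ i i' k, sig p q s i = some k → sig p q s i' = some k → i = i' := by
  intro i i' k h1 h2
  cases i <;> cases i' <;> cases k <;>
    simp only [sig] at h1 h2 <;> split_ifs at h1 h2 <;>
    simp_all [Fin.ext_iff] <;> omega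


/-- Let `n` be nilpotent of Jordan type `(p,q)` on `V`, `p ≥ q ≥ 1`, with adapted basis
`e_{i,j}`. If `F₁ = span(a·e_{1,1} + e_{1,2})` (a line in `ker n` different from
`span(e_{1,1})`), then the endomorphism induced by `n` on `V/F₁` is nilpotent of Jordan
type `(p, q−1)` (type `(p)` if `q = 1`), characterized by
`dim ker(n̄ˢ) = min(s,p) + min(s,q−1)` for all `s`. -/
theorem stmt9 {K V : Type*} [Field K] [AddCommGroup V] [Module K V]
    (p q : ℕ) (hq : 1 ≤ q) (hpq : q ≤ p) (hp : 0 < p)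
    (n : V →ₗ[K] V) (b : Module.Basis (Fin p ⊕ Fin q) K V)
    (hb1 : ∀ j : Fin p, n (b (Sum.inl j)) =
      if h : 0 < j.1 then b (Sum.inl ⟨j.1 - 1, Nat.lt_of_le_of_lt (Nat.sub_le j.1 1) j.2⟩)
      else 0)
    (hb2 : ∀ j : Fin q, n (b (Sum.inr j)) =
      if h : 0 < j.1 then b (Sum.inr ⟨j.1 - 1, Nat.lt_of_le_of_lt (Nat.sub_le j.1 1) j.2⟩)
      else 0)
    (a : K)
    (h : (K ∙ (a • b (Sum.inl ⟨0, hp⟩) + b (Sum.inr ⟨0, hq⟩))) ≤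
      Submodule.comap n (K ∙ (a • b (Sum.inl ⟨0, hp⟩) + b (Sum.inr ⟨0, hq⟩)))) :
    ∀ s, Module.finrank K
        (LinearMap.ker
          ((Submodule.mapQ (K ∙ (a • b (Sum.inl ⟨0, hp⟩) + b (Sum.inr ⟨0, hq⟩)))
            (K ∙ (a • b (Sum.inl ⟨0, hp⟩) + b (Sum.inr ⟨0, hq⟩))) n h) ^ s)) =
      min s p + min s (q - 1) := by
  classical
  have hfd : FiniteDimensional K V := Module.Finite.of_basis b
  intro s
  -- change of basis
  set u : V →ₗ[K] V := b.constr K (Sum.elim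
      (fun j => b (Sum.inl j))
      (fun j : Fin q => a • b (Sum.inl ⟨j.1, lt_of_lt_of_le j.2 hpq⟩) + b (Sum.inr j))) with hu
  set w : V →ₗ[K] V := b.constr K (Sum.elim
      (fun j => b (Sum.inl j))
      (fun j : Fin q => (-a) • b (Sum.inl ⟨j.1, lt_of_lt_of_le j.2 hpq⟩) + b (Sum.inr j))) with hw
  have huw : u ∘ₗ w = LinearMap.id := by
    apply b.ext
    intro i
    cases i with
    | inl j =>
      simp only [LinearMap.comp_apply, LinearMap.id_apply, hw, hu, Module.Basis.constr_basis,
        Sum.elim_inl, Sum.elim_inr]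
    | inr j =>
      simp only [LinearMap.comp_apply, LinearMap.id_apply, hw, hu, Module.Basis.constr_basis,
        Sum.elim_inl, Sum.elim_inr, map_add, map_smul]
      module
  have hwu : w ∘ₗ u = LinearMap.id := by
    apply b.ext
    intro i
    cases i with
    | inl j =>
      simp only [LinearMap.comp_apply, LinearMap.id_apply, hw, hu, Module.Basis.constr_basis,
        Sum.elim_inl, Sum.elim_inr]
    | inr j =>
      simp only [LinearMap.comp_apply, LinearMap.id_apply, hw, hu, Module.Basis.constr_basis,
        Sum.elim_inl, Sum.elim_inr, map_add, map_smul]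
      module
  set P : V ≃ₗ[K] V := LinearEquiv.ofLinear u w huw hwu with hP
  set e : Module.Basis (Fin p ⊕ Fin q) K V := b.map P with heB
  have he : ∀ i, e i = Sum.elim
      (fun j => b (Sum.inl j))
      (fun j : Fin q => a • b (Sum.inl ⟨j.1, lt_of_lt_of_le j.2 hpq⟩) + b (Sum.inr j)) i := by
    intro i
    simp only [heB, Module.Basis.map_apply, hP, LinearEquiv.ofLinear_apply, hu, Module.Basis.constr_basis]
  have he1 : ∀ j : Fin p, n (e (Sum.inl j)) =
      if _ : 0 < j.1 then e (Sum.inl ⟨j.1 - 1, by omega⟩) else 0 := by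
    intro j
    rw [he, Sum.elim_inl, hb1 j]
    by_cases h0 : 0 < j.1
    · rw [dif_pos h0, dif_pos h0, he, Sum.elim_inl]
    · rw [dif_neg h0, dif_neg h0]
  have he2 : ∀ j : Fin q, n (e (Sum.inr j)) =
      if _ : 0 < j.1 then e (Sum.inr ⟨j.1 - 1, by omega⟩) else 0 := by
    intro j
    rw [he, Sum.elim_inr, map_add, map_smul, hb1 _, hb2 j]
    by_cases h0 : 0 < j.1
    · rw [dif_pos h0, dif_pos h0, dif_pos h0, he, Sum.elim_inr]
    · rw [dif_neg h0, dif_neg h0, dif_neg h0]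
      simp
  have hpow : ∀ t i, (n ^ t) (e i) = (sig p q t i).elim 0 e := by
    intro t
    induction t with
    | zero => intro i; cases i <;> simp [sig]
    | succ t ih =>
      intro i
      rw [pow_succ', Module.End.mul_apply, ih i]
      cases i with
      | inl j =>
        simp only [sig]
        by_cases hs1 : t + 1 ≤ j.1
        · rw [dif_pos (by omega : t ≤ j.1), dif_pos hs1]
          simp only [Option.elim]
          rw [he1, dif_pos (by omega : 0 < j.1 - t)]
          congr 1
        · by_cases hs0 : t ≤ j.1
          · rw [dif_pos hs0, dif_neg hs1]
            simp only [Option.elim]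
            rw [he1, dif_neg (by omega : ¬ 0 < j.1 - t)]
          · rw [dif_neg hs0, dif_neg hs1]
            simp
      | inr j =>
        simp only [sig]
        by_cases hs1 : t + 1 ≤ j.1
        · rw [dif_pos (by omega : t ≤ j.1), dif_pos hs1]
          simp only [Option.elim]
          rw [he2, dif_pos (by omega : 0 < j.1 - t)]
          congr 1
        · by_cases hs0 : t ≤ j.1
          · rw [dif_pos hs0, dif_neg hs1]
            simp only [Option.elim]
            rw [he2, dif_neg (by omega : ¬ 0 < j.1 - t)]
          · rw [dif_neg hs0, dif_neg hs1]
            simp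
  have hv : a • b (Sum.inl ⟨0, hp⟩) + b (Sum.inr ⟨0, hq⟩) = e (Sum.inr ⟨0, hq⟩) := by
    rw [he, Sum.elim_inr]
  set F : Submodule K V := K ∙ (a • b (Sum.inl ⟨0, hp⟩) + b (Sum.inr ⟨0, hq⟩)) with hFdef
  have hF : F = Submodule.span K (e '' {Sum.inr ⟨0, hq⟩}) := by
    rw [hFdef, Set.image_singleton, hv]
  have hle : ∀ t : ℕ, F ≤ Submodule.comap (n ^ t) F := fun t =>
    F.le_comap_pow_of_le_comap h t
  rw [← Submodule.mapQ_pow F h s (hle s), myKerMapQ F (n ^ s) (hle s)]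
  have hcomap : Submodule.comap (n ^ s) F =
      Submodule.span K (e '' {i | ∀ k, sig p q s i = some k →
        k ∈ ({Sum.inr ⟨0, hq⟩} : Set (Fin p ⊕ Fin q))}) := by
    rw [hF]
    exact myComapSpan e (sig p q s) (sig_inj p q s) (n ^ s) (hpow s) _
  set tset : Finset (Fin p ⊕ Fin q) :=
    (Finset.univ.filter fun j : Fin p => j.1 < s).disjSum
      (Finset.univ.filter fun j : Fin q => j.1 ≤ s) with htset
  have hsets : {i | ∀ k, sig p q s i = some k →
      k ∈ ({Sum.inr ⟨0, hq⟩} : Set (Fin p ⊕ Fin q))} = ↑tset := by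
    ext i
    cases i with
    | inl j =>
      by_cases hs1 : s ≤ j.1
      · simp [sig, hs1, htset] <;> omega
      · simp [sig, hs1, htset] <;> omega
    | inr j =>
      by_cases hs1 : s ≤ j.1
      · simp [sig, hs1, htset, Fin.ext_iff]
        constructor
        · intro hall
          have h0 : j.1 - s = 0 := hall ⟨j.1 - s, by omega⟩ rfl
          omega
        · intro hj k hk
          omega
      · simp [sig, hs1, htset] <;> omega
  have hcard : tset.card = min s p + min (s + 1) q := by
    rw [htset, Finset.card_disjSum, myCardLt]
    congr 1
    rw [show (Finset.univ.filter fun j : Fin q => j.1 ≤ s)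
        = Finset.univ.filter fun j : Fin q => j.1 < s + 1 from by
      apply Finset.filter_congr; intro j _; simp [Nat.lt_succ_iff]]
    exact myCardLt q (s + 1)
  have hW : Module.finrank K (Submodule.comap (n ^ s) F) = min s p + min (s + 1) q := by
    rw [hcomap, hsets, myFinrankSpan e tset, hcard]
  have hF1 : Module.finrank K F = 1 := by
    rw [hFdef, hv]
    exact finrank_span_singleton (e.ne_zero _)
  have hrank : Module.finrank K (Submodule.map F.mkQ (Submodule.comap (n ^ s) F))
      + Module.finrank K F = Module.finrank K (Submodule.comap (n ^ s) F) := by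
    have hr := LinearMap.finrank_range_add_finrank_ker
      (F.mkQ.comp (Submodule.comap (n ^ s) F).subtype)
    rw [LinearMap.range_comp, Submodule.range_subtype, LinearMap.ker_comp,
      Submodule.ker_mkQ] at hr
    rwa [(Submodule.comapSubtypeEquivOfLe (hle s)).finrank_eq] at hr
  rw [hW, hF1] at hrank
  set X := Module.finrank K (Submodule.map F.mkQ (Submodule.comap (n ^ s) F)) with hX
  omega
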